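/- arXiv:2002.02641 — 3 statements merged into one kernel-verified Lean document; each statement's English description precedes it below -/
import Mathlib

section
/- In the linear configuration G_m consisting of nodes a_1,...,a_m, b_1,...,b_{2m+1}, c_m,...,c_1 on a path (in this left-to-right order), where all a_i and c_i have wakeup tag 0 and all b_i have wakeup tag 1, any deterministic anonymous leader election algorithm requires at least m-1 rounds: for all local rounds t < m-1, the histories of nodes b_m, b_{m+1}, b_{m+2} are identical. -/
/-- In the linear configuration `G_m`: a path of `4m+1` nodes `a_1,…,a_m, b_1,…,b_{2m+1},
c_m,…,c_1` (indices `0,…,4m`), where the `a_i` and `c_i` have wakeup tag 0 and the `b_i`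
have wakeup tag 1, any deterministic anonymous synchronous algorithm satisfies: for all
rounds `t < m - 1` the histories of the three central nodes `b_m, b_{m+1}, b_{m+2}`
(indices `2m-1, 2m, 2m+1`) are identical, and hence no decision function can single out a
unique leader before round `m - 1`. -/
theorem stmt12 {Hist Msg : Type*} (m : ℕ) (hm : 2 ≤ m)
    (tag : Fin (4 * m + 1) → ℕ)
    (htag : ∀ i, tag i = if m ≤ i.val ∧ i.val ≤ 3 * m then 1 else 0)
    (init : ℕ → Hist) (act : Hist → Option Msg) (step : Hist → Multiset Msg → Hist)
    (H : ℕ → Fin (4 * m + 1) → Hist)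
    (hH0 : ∀ v, H 0 v = init (tag v))
    (hHs : ∀ r v, H (r + 1) v = step (H r v)
      (Multiset.filterMap (fun u => act (H r u))
        (Finset.univ.filter
          (fun u : Fin (4 * m + 1) => v.val + 1 = u.val ∨ u.val + 1 = v.val)).val)) :
    (∀ t, t < m - 1 →
      H t ⟨2 * m - 1, by omega⟩ = H t ⟨2 * m, by omega⟩ ∧
      H t ⟨2 * m + 1, by omega⟩ = H t ⟨2 * m, by omega⟩) ∧
    ∀ t, t < m - 1 → ∀ f : Hist → Bool,
      ¬ ∃! v : Fin (4 * m + 1), f (H t v) = true := by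
  -- mirror symmetry
  have hmirror : ∀ t (v : Fin (4 * m + 1)), H t v = H t ⟨4 * m - v.val, by omega⟩ := by
    intro t
    induction t with
    | zero =>
      intro v
      rw [hH0, hH0, htag, htag]
      have : (m ≤ v.val ∧ v.val ≤ 3 * m) ↔
          (m ≤ (⟨4 * m - v.val, by omega⟩ : Fin (4 * m + 1)).val ∧
            (⟨4 * m - v.val, by omega⟩ : Fin (4 * m + 1)).val ≤ 3 * m) := by
        simp only [Fin.val_mk]
        have := v.isLt; omega
      simp only [this]
    | succ t ih =>
      intro v
      rw [hHs, hHs]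
      congr 1
      · exact ih v
      · have hinj : Function.Injective
            (fun u : Fin (4 * m + 1) => (⟨4 * m - u.val, by omega⟩ : Fin (4 * m + 1))) := by
          intro a b hab
          have ha := a.isLt; have hb := b.isLt
          simp only [Fin.mk.injEq] at hab
          exact Fin.ext (by omega)
        have hset : (Finset.univ.filter
            (fun u : Fin (4 * m + 1) =>
              (⟨4 * m - v.val, by omega⟩ : Fin (4 * m + 1)).val + 1 = u.val ∨
              u.val + 1 = (⟨4 * m - v.val, by omega⟩ : Fin (4 * m + 1)).val))
            = Finset.map ⟨_, hinj⟩ (Finset.univ.filter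
              (fun u : Fin (4 * m + 1) => v.val + 1 = u.val ∨ u.val + 1 = v.val)) := by
          ext u
          simp only [Finset.mem_filter, Finset.mem_univ, true_and, Finset.mem_map,
            Function.Embedding.coeFn_mk, Fin.val_mk]
          constructor
          · intro h
            refine ⟨⟨4 * m - u.val, by omega⟩, ?_, ?_⟩
            · have := u.isLt; have := v.isLt; simp only [Fin.val_mk]; omega
            · have := u.isLt; exact Fin.ext (by simp only [Fin.val_mk]; omega)
          · rintro ⟨w, hw, rfl⟩
            have := w.isLt; have := v.isLt; simp only [Fin.val_mk]; omega
        rw [hset, Finset.map_val, Multiset.filterMap_map]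
        congr 1
        funext u
        simp only [Function.comp_apply, Function.Embedding.coeFn_mk]
        rw [← ih u]
  -- central indistinguishability
  have hcentral : ∀ t, ∀ i j : ℕ, ∀ (hi1 : m + t ≤ i) (hi2 : i + t ≤ 3 * m)
      (hj1 : m + t ≤ j) (hj2 : j + t ≤ 3 * m),
      H t ⟨i, by omega⟩ = H t ⟨j, by omega⟩ := by
    intro t
    induction t with
    | zero =>
      intro i j hi1 hi2 hj1 hj2
      rw [hH0, hH0, htag, htag]
      rw [if_pos ⟨by simp only [Fin.val_mk]; omega, by simp only [Fin.val_mk]; omega⟩,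
          if_pos ⟨by simp only [Fin.val_mk]; omega, by simp only [Fin.val_mk]; omega⟩]
    | succ t ih =>
      intro i j hi1 hi2 hj1 hj2
      have hfin : ∀ k : ℕ, ∀ (hk1 : 1 ≤ k) (hk2 : k + 1 ≤ 4 * m),
          (Finset.univ.filter
            (fun u : Fin (4 * m + 1) =>
              (⟨k, by omega⟩ : Fin (4 * m + 1)).val + 1 = u.val ∨
              u.val + 1 = (⟨k, by omega⟩ : Fin (4 * m + 1)).val))
          = {(⟨k + 1, by omega⟩ : Fin (4 * m + 1)), ⟨k - 1, by omega⟩} := by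
        intro k hk1 hk2
        ext u
        simp only [Finset.mem_filter, Finset.mem_univ, true_and, Finset.mem_insert,
          Finset.mem_singleton, Fin.ext_iff, Fin.val_mk]
        omega
      rw [hHs, hHs]
      congr 1
      · exact ih i j (by omega) (by omega) (by omega) (by omega)
      · rw [hfin i (by omega) (by omega), hfin j (by omega) (by omega)]
        have hpair : ∀ k : ℕ, ∀ (hk : k + 1 ≤ 4 * m) (hk1 : 1 ≤ k),
            (({(⟨k + 1, by omega⟩ : Fin (4 * m + 1)), ⟨k - 1, by omega⟩} :
                Finset (Fin (4 * m + 1))).val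
              = (⟨k + 1, by omega⟩ : Fin (4 * m + 1)) ::ₘ
                  {(⟨k - 1, by omega⟩ : Fin (4 * m + 1))}) := by
          intro k hk hk1
          have hne : (⟨k + 1, by omega⟩ : Fin (4 * m + 1)) ∉
              ({⟨k - 1, by omega⟩} : Finset (Fin (4 * m + 1))) := by
            simp only [Finset.mem_singleton, Fin.ext_iff, Fin.val_mk]
            omega
          rw [Finset.insert_val_of_notMem hne, Finset.singleton_val]
        rw [hpair i (by omega) (by omega), hpair j (by omega) (by omega)]
        have key : ∀ s : Multiset (Fin (4 * m + 1)),
            Multiset.filterMap (fun u => act (H t u)) s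
              = Multiset.filterMap id (s.map (fun u => act (H t u))) := by
          intro s
          rw [Multiset.filterMap_map, Function.id_comp]
        rw [key, key, Multiset.map_cons, Multiset.map_cons, Multiset.map_singleton,
          Multiset.map_singleton,
          ih (i+1) (j+1) (by omega) (by omega) (by omega) (by omega),
          ih (i-1) (j-1) (by omega) (by omega) (by omega) (by omega)]
  refine ⟨fun t ht => ⟨hcentral t (2*m-1) (2*m) (by omega) (by omega) (by omega) (by omega),
           hcentral t (2*m+1) (2*m) (by omega) (by omega) (by omega) (by omega)⟩, ?_⟩
  rintro t ht f ⟨v, hv, huniq⟩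
  have hmv : f (H t ⟨4 * m - v.val, by omega⟩) = true := by rw [← hmirror t v]; exact hv
  have hveq : v = ⟨4 * m - v.val, by omega⟩ := (huniq _ hmv).symm
  have hv2m : v.val = 2 * m := by
    have h1 := v.isLt
    have h2 := congrArg Fin.val hveq
    simp only [Fin.val_mk] at h2; omega
  have h1 : f (H t ⟨2 * m - 1, by omega⟩) = true := by
    rw [hcentral t (2*m-1) (2*m) (by omega) (by omega) (by omega) (by omega)]
    have hv' : v = ⟨2 * m, by omega⟩ := Fin.ext hv2m
    rw [← hv']; exact hv
  have h2 := congrArg Fin.val (huniq _ h1)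
  simp only [Fin.val_mk] at h2
  omega
end

section
/- In a synchronous network where a node's history at round r can depend only on the initial data of nodes at graph distance at most r, two nodes whose r-neighbourhoods (with tags) are isomorphic via a tag-preserving isomorphism mapping one to the other have equal histories at round r. -/
/-- Locality of synchronous anonymous computation: if `ψ` is a tag-preserving isomorphism
of the balls of radius `r` around `v` and around `w` (bijective on the balls, preserving
adjacency within the balls and the wakeup tags) with `ψ v = w`, then the histories of `v`
and `w` after `r` rounds coincide. -/
theorem stmt13 {V : Type*} [Fintype V] [DecidableEq V]
    (G : SimpleGraph V) [DecidableRel G.Adj]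
    {Hist Msg : Type*} (t : V → ℕ)
    (init : ℕ → Hist) (act : Hist → Option Msg) (step : Hist → Multiset Msg → Hist)
    (H : ℕ → V → Hist)
    (hH0 : ∀ v, H 0 v = init (t v))
    (hHs : ∀ r v, H (r + 1) v =
      step (H r v) (Multiset.filterMap (fun u => act (H r u)) (G.neighborFinset v).val))
    (v w : V) (r : ℕ) (ψ : V → V)
    (hψv : ψ v = w)
    (hbij : Set.BijOn ψ {x | ∃ p : G.Walk v x, p.length ≤ r}
      {x | ∃ p : G.Walk w x, p.length ≤ r})
    (hadj : ∀ x y, (∃ p : G.Walk v x, p.length ≤ r) → (∃ p : G.Walk v y, p.length ≤ r) →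
      (G.Adj x y ↔ G.Adj (ψ x) (ψ y)))
    (htag : ∀ x, (∃ p : G.Walk v x, p.length ≤ r) → t (ψ x) = t x) :
    H r v = H r w := by
  -- ψ maps the ball of radius n around v into the ball of radius n around w
  have hCw : ∀ n, n ≤ r → ∀ x, (∃ p : G.Walk v x, p.length ≤ n) →
      ∃ q : G.Walk w (ψ x), q.length ≤ n := by
    intro n
    induction n with
    | zero =>
      rintro _ x ⟨p, hp⟩
      have hx : v = x := SimpleGraph.Walk.eq_of_length_eq_zero (Nat.le_zero.mp hp)
      subst hx
      exact ⟨(SimpleGraph.Walk.nil : G.Walk w w).copy rfl hψv.symm, by simp⟩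
    | succ n ihn =>
      rintro hn x ⟨p, hp⟩
      rcases Nat.lt_succ_iff_lt_or_eq.mp (Nat.lt_succ_of_le hp) with hlt | heq
      · obtain ⟨q, hq⟩ := ihn (Nat.le_of_succ_le hn) x ⟨p, Nat.lt_succ_iff.mp hlt⟩
        exact ⟨q, hq.trans (Nat.le_succ n)⟩
      · cases hpr : p.reverse with
        | nil =>
          exfalso
          have := SimpleGraph.Walk.length_reverse p
          rw [hpr] at this
          simp at this
          omega
        | @cons _ y _ h q =>
          -- h : G.Adj x y, q : G.Walk y v
          have hlen : q.length + 1 = n + 1 := by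
            have := SimpleGraph.Walk.length_reverse p
            rw [hpr] at this
            simpa [heq] using this
          have hyball : ∃ p' : G.Walk v y, p'.length ≤ n :=
            ⟨q.reverse, by rw [SimpleGraph.Walk.length_reverse]; omega⟩
          have hxball : ∃ p' : G.Walk v x, p'.length ≤ r := ⟨p, hp.trans hn⟩
          have hyr : ∃ p' : G.Walk v y, p'.length ≤ r := by
            obtain ⟨p', hp'⟩ := hyball
            exact ⟨p', hp'.trans (Nat.le_of_succ_le hn)⟩
          obtain ⟨qw, hqw⟩ := ihn (Nat.le_of_succ_le hn) y hyball
          have hadj' : G.Adj (ψ y) (ψ x) := (hadj y x hyr hxball).mp h.symm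
          exact ⟨qw.concat hadj', by rw [SimpleGraph.Walk.length_concat]; omega⟩
  -- main induction on the round number
  have key : ∀ k, k ≤ r → ∀ x, (∃ p : G.Walk v x, p.length ≤ r - k) → H k (ψ x) = H k x := by
    intro k
    induction k with
    | zero =>
      rintro _ x ⟨p, hp⟩
      have hx' : ∃ p : G.Walk v x, p.length ≤ r := ⟨p, by omega⟩
      rw [hH0, hH0, htag x hx']
    | succ k ih =>
      rintro hk x ⟨p, hp⟩
      have hk' : k ≤ r := Nat.le_of_succ_le hk
      have hxk : ∃ p : G.Walk v x, p.length ≤ r - k := ⟨p, by omega⟩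
      have hxr : ∃ p : G.Walk v x, p.length ≤ r := ⟨p, by omega⟩
      -- every neighbour of x is in the ball of radius r - k around v
      have hnb : ∀ u, G.Adj x u → ∃ q : G.Walk v u, q.length ≤ r - k := by
        intro u hu
        exact ⟨p.concat hu, by rw [SimpleGraph.Walk.length_concat]; omega⟩
      have hnbr : ∀ u, G.Adj x u → ∃ q : G.Walk v u, q.length ≤ r := by
        intro u hu
        obtain ⟨q, hq⟩ := hnb u hu
        exact ⟨q, by omega⟩
      -- the neighbourhood of ψ x is the image under ψ of the neighbourhood of x
      have himg : G.neighborFinset (ψ x) = (G.neighborFinset x).image ψ := by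
        ext y'
        simp only [SimpleGraph.mem_neighborFinset, Finset.mem_image]
        constructor
        · intro hadjy
          obtain ⟨q, hq⟩ := hCw (r - (k + 1)) (Nat.sub_le r _) x ⟨p, hp⟩
          have hy' : y' ∈ {z | ∃ q : G.Walk w z, q.length ≤ r} :=
            ⟨q.concat hadjy, by rw [SimpleGraph.Walk.length_concat]; omega⟩
          obtain ⟨u, hu, hψu⟩ := hbij.2.2 hy'
          refine ⟨u, ?_, hψu⟩
          rw [hadj x u hxr hu, hψu]
          exact hadjy
        · rintro ⟨u, hu, rfl⟩
          exact (hadj x u hxr (hnbr u hu)).mp hu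
      have hinj : Set.InjOn ψ ↑(G.neighborFinset x) := by
        intro a ha b hb hab
        rw [Finset.mem_coe, SimpleGraph.mem_neighborFinset] at ha hb
        exact hbij.2.1 (hnbr a ha) (hnbr b hb) hab
      have hval : (G.neighborFinset (ψ x)).val = (G.neighborFinset x).val.map ψ := by
        rw [himg]
        exact Finset.image_val_of_injOn hinj
      rw [hHs, hHs, ih hk' x hxk]
      congr 1
      rw [hval]
      have hfm : ∀ s : Multiset V,
          Multiset.filterMap (fun u => act (H k u)) s =
            Multiset.filterMap act (s.map (H k)) := by
        intro s
        exact (Multiset.filterMap_map (H k) act s).symm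
      rw [hfm, hfm, Multiset.map_map]
      congr 1
      apply Multiset.map_congr rfl
      intro u hu
      rw [Finset.mem_val, SimpleGraph.mem_neighborFinset] at hu
      exact ih hk' u (hnb u hu)
  have := key r (le_refl r) v ⟨SimpleGraph.Walk.nil, by simp⟩
  rw [hψv] at this
  exact this.symm
end

section
/- For every m ≥ 1, in the path configuration H_m with nodes a — b — c — d having wakeup tags t_a = m, t_b = 0, t_c = 0, t_d = m+1, any deterministic anonymous leader election algorithm takes at least m rounds. Specifically: if the nodes b and c (which have identical histories while hearing only silence) first transmit in global round t < m, then nodes a and d are woken by these messages and have identical histories ever after, and b and c have identical histories ever after, so no leader can be elected. -/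
lemma fm1 {α β : Type*} (g : α → Option β) (a : α) :
    Multiset.filterMap g {a} = (g a).elim 0 (fun x => {x}) := by
  show Multiset.filterMap g (a ::ₘ 0) = _
  cases h : g a with
  | none => rw [Multiset.filterMap_cons_none _ _ h]; rfl
  | some x => rw [Multiset.filterMap_cons_some _ _ _ h]; rfl

lemma fm2 {α β : Type*} (g : α → Option β) (a b : α) :
    Multiset.filterMap g {a, b} = (g a).elim 0 (fun x => {x}) + (g b).elim 0 (fun x => {x}) := by
  show Multiset.filterMap g (a ::ₘ {b}) = _
  cases h : g a with
  | none => rw [Multiset.filterMap_cons_none _ _ h, fm1]; simp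
  | some x => rw [Multiset.filterMap_cons_some _ _ _ h, fm1]; cases g b <;> simp

/-- In the path configuration `H_m` with nodes `a — b — c — d` (indices `0,1,2,3`) and
wakeup tags `t_a = m`, `t_b = t_c = 0`, `t_d = m + 1`, in the anonymous synchronous radio
model with collision detection (a node's history is the list of received multisets since
its wakeup; an asleep node is woken by an incoming message, recording it, or wakes
spontaneously in the round equal to its tag, recording silence): if nodes `b, c` first
transmit in a global round `tf < m`, then nodes `a` and `d` are woken by these messages
and have identical histories forever, and `b` and `c` have identical histories forever,
so no decision function on histories elects a unique leader.  Hence any leader election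
algorithm for `H_m` takes at least `m` rounds. -/
theorem stmt14 {Msg : Type*} [DecidableEq Msg] (m : ℕ) (hm : 1 ≤ m)
    (tag : Fin 4 → ℕ) (htag : tag = ![m, 0, 0, m + 1])
    (act : List (Multiset Msg) → Option Msg)
    (H : ℕ → Fin 4 → Option (List (Multiset Msg)))
    (msgs : ℕ → Fin 4 → Multiset Msg)
    (hmsgs : ∀ r v, msgs r v = Multiset.filterMap (fun u => (H r u).bind act)
      (Finset.univ.filter (fun u : Fin 4 => v.val + 1 = u.val ∨ u.val + 1 = v.val)).val)
    (hH0 : ∀ v, H 0 v = none)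
    (hHs : ∀ r v, H (r + 1) v =
      match H r v with
      | some h => some (msgs r v :: h)
      | none =>
        if msgs r v ≠ 0 then some [msgs r v]
        else if r = tag v then some [(0 : Multiset Msg)] else none)
    (tf : ℕ) (htf : tf < m)
    (hquiet : ∀ r < tf, ∀ h, H r 1 = some h → act h = none)
    (htrans : ∃ h, H tf 1 = some h ∧ act h ≠ none) :
    (∀ r, H r 0 = H r 3) ∧ (∀ r, H r 1 = H r 2) ∧
      ∀ (r : ℕ) (f : List (Multiset Msg) → Bool),
        ¬ ∃! v : Fin 4, ∃ h, H r v = some h ∧ f h = true := by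
  have t0 : tag 0 = m := by simp [htag]
  have t1 : tag 1 = 0 := by simp [htag]
  have t2 : tag 2 = 0 := by simp [htag]
  have t3 : tag 3 = m + 1 := by simp [htag]
  have f0 : (Finset.univ.filter (fun u : Fin 4 => (0:Fin 4).val + 1 = u.val ∨ u.val + 1 = (0:Fin 4).val)) = {1} := by decide
  have f3 : (Finset.univ.filter (fun u : Fin 4 => (3:Fin 4).val + 1 = u.val ∨ u.val + 1 = (3:Fin 4).val)) = {2} := by decide
  have f1 : (Finset.univ.filter (fun u : Fin 4 => (1:Fin 4).val + 1 = u.val ∨ u.val + 1 = (1:Fin 4).val)) = {0, 2} := by decide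
  have f2 : (Finset.univ.filter (fun u : Fin 4 => (2:Fin 4).val + 1 = u.val ∨ u.val + 1 = (2:Fin 4).val)) = {1, 3} := by decide
  have h0 : ∀ r, msgs r 0 = ((H r 1).bind act).elim 0 (fun x => {x}) := by
    intro r; rw [hmsgs, f0]; exact fm1 _ 1
  have h3 : ∀ r, msgs r 3 = ((H r 2).bind act).elim 0 (fun x => {x}) := by
    intro r; rw [hmsgs, f3]; exact fm1 _ 2
  have h1 : ∀ r, msgs r 1 = ((H r 0).bind act).elim 0 (fun x => {x})
      + ((H r 2).bind act).elim 0 (fun x => {x}) := by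
    intro r; rw [hmsgs, f1]; exact fm2 _ 0 2
  have h2 : ∀ r, msgs r 2 = ((H r 1).bind act).elim 0 (fun x => {x})
      + ((H r 3).bind act).elim 0 (fun x => {x}) := by
    intro r; rw [hmsgs, f2]; exact fm2 _ 1 3
  have main : ∀ r, (H r 0 = H r 3 ∧ H r 1 = H r 2) ∧
      (r ≤ tf → H r 0 = none) ∧ (tf < r → H r 0 ≠ none) := by
    intro r
    induction r with
    | zero =>
      refine ⟨⟨by rw [hH0, hH0], by rw [hH0, hH0]⟩, fun _ => hH0 0, fun h => absurd h (by omega)⟩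
    | succ r ih =>
      obtain ⟨⟨e03, e12⟩, hno, hyes⟩ := ih
      have m03 : msgs r 0 = msgs r 3 := by rw [h0, h3, e12]
      have m12 : msgs r 1 = msgs r 2 := by rw [h1, h2, e03, e12]; exact add_comm _ _
      refine ⟨⟨?_, ?_⟩, ?_, ?_⟩
      · rw [hHs r 0, hHs r 3, ← e03, ← m03]
        cases hc : H r 0 with
        | some h => rfl
        | none =>
          have hr : r ≤ tf := by
            by_contra hr
            exact hyes (by omega) hc
          have : r ≠ tag 0 := by rw [t0]; omega
          have : r ≠ tag 3 := by rw [t3]; omega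
          by_cases hz : msgs r 0 ≠ 0 <;> simp_all
      · rw [hHs r 1, hHs r 2, ← e12, ← m12, t1, t2]
      · intro hle
        have hr : r < tf := hle
        have hc : H r 0 = none := hno (le_of_lt hr)
        have hz : msgs r 0 = 0 := by
          rw [h0]
          cases hb : H r 1 with
          | none => rfl
          | some h => simp [hquiet r hr h hb]
        rw [hHs, hc]
        simp only [hz, ne_eq, not_true_eq_false, if_false, ite_eq_right_iff, reduceCtorEq]
        have : r ≠ tag 0 := by rw [t0]; omega
        simp [this]
      · intro hlt
        rcases Nat.lt_succ_iff_lt_or_eq.mp hlt with hlt' | heq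
        · have hne := hyes hlt'
          rw [hHs]
          cases hc : H r 0 with
          | none => exact absurd hc hne
          | some h => simp
        · obtain ⟨h, hh, ha⟩ := htrans
          obtain ⟨x, hx⟩ := Option.ne_none_iff_exists'.mp ha
          have hz : msgs r 0 ≠ 0 := by
            rw [h0, ← heq, hh]
            simp [hx]
          rw [hHs]
          cases hc : H r 0 with
          | some h2 => simp
          | none => simp [hz]
  refine ⟨fun r => (main r).1.1, fun r => (main r).1.2, ?_⟩
  rintro r f ⟨v, ⟨h, hv, hf⟩, huniq⟩
  obtain ⟨⟨e03, e12⟩, -, -⟩ := main r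
  fin_cases v
  · have := huniq 3 ⟨h, by rw [← e03]; exact hv, hf⟩
    simp at this
  · have := huniq 2 ⟨h, by rw [← e12]; exact hv, hf⟩
    simp at this
  · have := huniq 1 ⟨h, by rw [e12]; exact hv, hf⟩
    simp at this
  · have := huniq 0 ⟨h, by rw [e03]; exact hv, hf⟩
    simp at this
end
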